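/- Let k be a field and V, U finite-dimensional k-vector spaces with V ≠ 0, and let f : End(V) → End(U) be a unital homomorphism of k-algebras. Then there exist a finite-dimensional k-vector space W and a k-linear isomorphism φ : V ⊗ W → U such that f(x) = φ ∘ (x ⊗ id_W) ∘ φ⁻¹ for all x ∈ End(V). -/

import Mathlib

open TensorProduct Matrix

section aux

variable {n : Type*} [Fintype n] [DecidableEq n] {R : Type*} [CommRing R]

lemma aux_sum_stdBasisMatrix_diag : ∑ i : n, Matrix.single i i (1 : R) = 1 := by
  ext a b
  simp only [Matrix.sum_apply, Matrix.single, Matrix.one_apply, of_apply]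
  by_cases h : a = b
  · subst h; simp
  · simp only [if_neg h]
    refine Finset.sum_eq_zero fun i _ => ?_
    rw [if_neg]
    rintro ⟨rfl, rfl⟩; exact h rfl

lemma aux_mul_stdBasisMatrix (N : Matrix n n R) (j z : n) :
    N * Matrix.single j z 1 = ∑ i : n, N i j • Matrix.single i z 1 := by
  ext a c
  simp only [Matrix.sum_apply, Matrix.smul_apply, Matrix.mul_apply, Matrix.single, of_apply,
    smul_eq_mul, mul_ite, mul_one, mul_zero]
  by_cases h : c = z
  · subst h
    simp [Finset.sum_ite_eq, eq_comm]
  · simp [Ne.symm h, fun (x:n) => show ¬(j = x ∧ z = c) from fun ⟨_, hz⟩ => h hz.symm]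

end aux

theorem stmt0 {k V U : Type} [Field k]
    [AddCommGroup V] [Module k V] [FiniteDimensional k V] [Nontrivial V]
    [AddCommGroup U] [Module k U] [FiniteDimensional k U]
    (f : Module.End k V →ₐ[k] Module.End k U) :
    ∃ (W : Type) (_ : AddCommGroup W) (_ : Module k W),
      FiniteDimensional k W ∧
      ∃ φ : V ⊗[k] W ≃ₗ[k] U,
        ∀ x : Module.End k V,
          f x = φ.toLinearMap ∘ₗ x.rTensor W ∘ₗ φ.symm.toLinearMap := by
  classical
  haveI : NeZero (Module.finrank k V) := ⟨Module.finrank_pos.ne'⟩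
  set n := Module.finrank k V with hn
  let b : Module.Basis (Fin n) k V := Module.finBasis k V
  let A : Module.End k V ≃ₐ[k] Matrix (Fin n) (Fin n) k := LinearMap.toMatrixAlgEquiv b
  let E : Fin n → Fin n → Module.End k V := fun i j => A.symm (Matrix.single i j 1)
  have hAE : ∀ i j, A (E i j) = Matrix.single i j 1 := fun i j => A.apply_symm_apply _
  have hmul : ∀ i j m : Fin n, E i j * E j m = E i m := by
    intro i j m
    simp only [E, ← _root_.map_mul, Matrix.single_mul_single_same, one_mul]
  have hmul0 : ∀ (i j l m : Fin n), j ≠ l → E i j * E l m = 0 := by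
    intro i j l m h
    simp only [E, ← _root_.map_mul, Matrix.single_mul_single_of_ne _ _ _ _ h, map_zero]
  have hsum : ∑ i, E i i = 1 := by
    simp only [E, ← map_sum, aux_sum_stdBasisMatrix_diag, _root_.map_one]
  set Wsub : Submodule k U := LinearMap.range (f (E 0 0)) with hW
  have hproj : ∀ u : U, u ∈ Wsub → f (E 0 0) u = u := by
    rintro _ ⟨v, rfl⟩
    rw [← Module.End.mul_apply, ← _root_.map_mul, hmul]
  have hmem : ∀ (i : Fin n) (u : U), f (E 0 i) u ∈ Wsub := by
    intro i u
    exact ⟨f (E 0 i) u, by rw [← Module.End.mul_apply, ← _root_.map_mul, hmul]⟩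
  -- forward map
  let F : V ⊗[k] Wsub →ₗ[k] U :=
    TensorProduct.lift (b.constr k fun i => (f (E i 0)) ∘ₗ Wsub.subtype)
  have hF : ∀ (j : Fin n) (w : Wsub), F (b j ⊗ₜ w) = f (E j 0) w := by
    intro j w
    simp [F, Module.Basis.constr_basis]
  -- backward map
  let G : U →ₗ[k] V ⊗[k] Wsub :=
    ∑ i : Fin n, (TensorProduct.mk k V Wsub (b i)) ∘ₗ
      (LinearMap.codRestrict Wsub (f (E 0 i)) (hmem i))
  have hG : ∀ u : U, G u = ∑ i : Fin n, b i ⊗ₜ (⟨f (E 0 i) u, hmem i u⟩ : Wsub) := by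
    intro u
    simp [G, LinearMap.sum_apply]
    rfl
  have hFG : ∀ u, F (G u) = u := by
    intro u
    rw [hG, map_sum]
    have : ∀ i : Fin n, F (b i ⊗ₜ (⟨f (E 0 i) u, hmem i u⟩ : Wsub)) = f (E i i) u := by
      intro i
      rw [hF]
      show f (E i 0) (f (E 0 i) u) = _
      rw [← Module.End.mul_apply, ← _root_.map_mul, hmul]
    rw [Finset.sum_congr rfl fun i _ => this i, ← LinearMap.sum_apply, ← map_sum, hsum,
      _root_.map_one, Module.End.one_apply]
  have hGF : ∀ (j : Fin n) (w : Wsub), G (F (b j ⊗ₜ w)) = b j ⊗ₜ w := by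
    intro j w
    rw [hF, hG]
    rw [Finset.sum_eq_single j]
    · congr 1
      ext
      show f (E 0 j) (f (E j 0) w) = (w : U)
      rw [← Module.End.mul_apply, ← _root_.map_mul, hmul]
      exact hproj _ w.2
    · intro i _ hij
      have : f (E 0 i) (f (E j 0) (w : U)) = 0 := by
        rw [← Module.End.mul_apply, ← _root_.map_mul, hmul0 _ _ _ _ hij, map_zero,
          LinearMap.zero_apply]
      have h0 : (⟨f (E 0 i) (f (E j 0) (w:U)), hmem i _⟩ : Wsub) = 0 := Subtype.ext this
      rw [h0, tmul_zero]
    · intro h; exact absurd (Finset.mem_univ j) h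
  let φ : V ⊗[k] Wsub ≃ₗ[k] U :=
    LinearEquiv.ofLinear F G (by ext u; exact hFG u) (by
      apply TensorProduct.ext
      apply b.ext
      intro j
      apply LinearMap.ext
      intro w
      simpa using hGF j w)
  refine ⟨Wsub, inferInstance, inferInstance, inferInstance, φ, ?_⟩
  have key : ∀ x : Module.End k V,
      (f x) ∘ₗ φ.toLinearMap = φ.toLinearMap ∘ₗ x.rTensor Wsub := by
    intro x
    apply TensorProduct.ext
    apply b.ext
    intro j
    apply LinearMap.ext
    intro w
    have hφ : ∀ t, φ t = F t := fun t => rfl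
    simp only [LinearMap.compr₂ₛₗ_apply, mk_apply, LinearMap.comp_apply,
      LinearMap.rTensor_tmul, LinearEquiv.coe_coe, hφ]
    have hxE : x * E j 0 = ∑ i, (A x) i j • E i 0 := by
      apply A.injective
      rw [_root_.map_mul, hAE, aux_mul_stdBasisMatrix, map_sum]
      exact Finset.sum_congr rfl fun i _ => by rw [_root_.map_smul, hAE]
    have hxb : x (b j) = ∑ i, (A x) i j • b i := by
      conv_lhs => rw [← b.sum_repr (x (b j))]
      exact Finset.sum_congr rfl fun i _ => by
        rw [LinearMap.toMatrixAlgEquiv_apply]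
    calc f x (F (b j ⊗ₜ w))
        = f (x * E j 0) w := by
          rw [hF, ← Module.End.mul_apply, ← _root_.map_mul]
      _ = ∑ i, (A x) i j • f (E i 0) w := by
          rw [hxE, map_sum, LinearMap.sum_apply]
          exact Finset.sum_congr rfl fun i _ => by
            rw [_root_.map_smul, LinearMap.smul_apply]
      _ = F ((x (b j)) ⊗ₜ w) := by
          rw [hxb, sum_tmul, map_sum]
          exact (Finset.sum_congr rfl fun i _ => by
            rw [← smul_tmul', _root_.map_smul, hF]).symm
  intro x
  apply LinearMap.ext
  intro u
  have h := LinearMap.congr_fun (key x) (φ.symm u)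
  simpa using h
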